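/- For every n ≥ 1, the number of distinct nonempty palindromic factors of F[1,n] (the prefix of the Fibonacci word of length n) is exactly n. -/

import Mathlib

/-- The Fibonacci substitution `σ(a) = ab`, `σ(b) = a`, with `a = 0`, `b = 1`. -/
def fibSub : Fin 2 → List (Fin 2) := fun x => if x = 0 then [0, 1] else [0]

/-- Iterates `σ^m(a)`. -/
def fibList : ℕ → List (Fin 2)
  | 0 => [0]
  | n + 1 => (fibList n).flatMap fibSub

/-- The infinite Fibonacci word, the fixed point of `σ` beginning with `a = 0`
(0-indexed: `fibWord i` is the `(i+1)`-st letter). -/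
def fibWord (i : ℕ) : Fin 2 := (fibList (i + 1)).getD i 0

/-- The prefix `F[1,n]` of the Fibonacci word, of length `n`. -/
def fibPrefix (n : ℕ) : List (Fin 2) := (List.range n).map fibWord

namespace FibRich

abbrev phi (u : List (Fin 2)) : List (Fin 2) := u.flatMap fibSub

lemma two_cases : ∀ x : Fin 2, x = 0 ∨ x = 1 := by decide

lemma phi_append (u v : List (Fin 2)) : phi (u ++ v) = phi u ++ phi v :=
  List.flatMap_append (xs := u) (ys := v) (f := fibSub)

lemma phi_cons (x : Fin 2) (u : List (Fin 2)) : phi (x :: u) = fibSub x ++ phi u := rfl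

lemma length_le_phi (l : List (Fin 2)) : l.length ≤ (phi l).length := by
  induction l with
  | nil => simp
  | cons x t ih =>
    rw [phi_cons, List.length_append, List.length_cons]
    have hx : 1 ≤ (fibSub x).length := by
      rcases two_cases x with h | h <;> subst h <;> simp [fibSub]
    omega

lemma fibList_prefix (n : ℕ) : fibList n <+: fibList (n + 1) := by
  induction n with
  | zero => exact ⟨[1], rfl⟩
  | succ n ih =>
    obtain ⟨t, ht⟩ := ih
    refine ⟨phi t, ?_⟩
    rw [show fibList (n+2) = phi (fibList (n+1)) from rfl, ← ht, phi_append,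
        show phi (fibList n) = fibList (n+1) from rfl, ht]

lemma fibList_prefix_le {m n : ℕ} (h : m ≤ n) : fibList m <+: fibList n := by
  induction n with
  | zero => simp_all
  | succ n ih =>
    rcases Nat.lt_or_ge m (n+1) with h' | h'
    · exact (ih (by omega)).trans (fibList_prefix n)
    · have : m = n + 1 := by omega
      subst this; rfl

lemma fibList_head (n : ℕ) : ∃ t, fibList n = 0 :: t := by
  obtain ⟨t, ht⟩ := fibList_prefix_le (Nat.zero_le n)
  exact ⟨t, by simpa [fibList] using ht.symm⟩

lemma lt_length_fibList (n : ℕ) : n < (fibList n).length := by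
  induction n with
  | zero => simp [fibList]
  | succ n ih =>
    obtain ⟨t, ht⟩ := fibList_head n
    have : (fibList (n+1)).length = (phi (fibList n)).length := rfl
    rw [this, ht, phi_cons]
    have := length_le_phi t
    have hl : (fibList n).length = t.length + 1 := by rw [ht]; simp
    simp only [show fibSub 0 = [0,1] from rfl, List.length_append, List.length_cons,
      List.length_nil]
    omega

lemma fibWord_spec {N i : ℕ} (h : i < (fibList N).length) : (fibList N)[i] = fibWord i := by
  have hi : i < (fibList (i+1)).length := lt_length_fibList (i+1) |>.trans_le' (by omega)
  have : fibWord i = (fibList (i+1))[i] := by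
    simp [fibWord, List.getD_eq_getElem?_getD, List.getElem?_eq_getElem hi]
  rw [this]
  rcases Nat.le_total (i+1) N with hle | hle
  · exact ((fibList_prefix_le hle).getElem hi).symm
  · exact (fibList_prefix_le hle).getElem h

lemma fibPrefix_length (n : ℕ) : (fibPrefix n).length = n := by simp [fibPrefix]

lemma fibPrefix_getElem {p n : ℕ} (h : p < n) :
    (fibPrefix n)[p]'(by rw [fibPrefix_length]; exact h) = fibWord p := by
  simp [fibPrefix]

lemma fibPrefix_eq_take {n N : ℕ} (h : n ≤ (fibList N).length) :
    fibPrefix n = (fibList N).take n := by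
  apply List.ext_getElem
  · simp [fibPrefix_length, h]
  · intro i h1 h2
    rw [fibPrefix_length] at h1
    rw [fibPrefix_getElem h1, List.getElem_take]
    exact (fibWord_spec (by omega)).symm

lemma fibPrefix_prefix_fibList (n : ℕ) : fibPrefix n <+: fibList n := by
  rw [fibPrefix_eq_take (le_of_lt (lt_length_fibList n))]
  exact List.take_prefix _ _

lemma prefix_fibList_eq {l : List (Fin 2)} {N : ℕ} (h : l <+: fibList N) :
    l = fibPrefix l.length := by
  rw [fibPrefix_eq_take h.length_le, ← List.prefix_iff_eq_take.mp h]

lemma prefix_fibPrefix_eq {l : List (Fin 2)} {n : ℕ} (h : l <+: fibPrefix n) :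
    l = fibPrefix l.length :=
  prefix_fibList_eq (h.trans (fibPrefix_prefix_fibList n))

lemma fibPrefix_succ (m : ℕ) : fibPrefix (m + 1) = fibPrefix m ++ [fibWord m] := by
  simp [fibPrefix, List.range_succ]

lemma fibPrefix_mono {m n : ℕ} (h : m ≤ n) : fibPrefix m <+: fibPrefix n := by
  rw [fibPrefix_eq_take (le_trans h (le_of_lt (lt_length_fibList n))),
      fibPrefix_eq_take (le_of_lt (lt_length_fibList n))]
  exact List.take_prefix_take_left h

def B (m : ℕ) : ℕ := (phi (fibPrefix m)).length

lemma phi_fibPrefix (m : ℕ) : phi (fibPrefix m) = fibPrefix (B m) := by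
  obtain ⟨r, hr⟩ := fibPrefix_prefix_fibList m
  have h1 : phi (fibPrefix m) <+: fibList (m + 1) := by
    refine ⟨phi r, ?_⟩
    rw [← phi_append, hr]; rfl
  exact prefix_fibList_eq h1

lemma B_zero : B 0 = 0 := rfl

lemma B_succ (m : ℕ) : B (m + 1) = B m + (fibSub (fibWord m)).length := by
  simp [B, fibPrefix_succ, phi_append, phi_cons]

lemma B_lt (m : ℕ) : B m < B (m + 1) := by
  have h : 1 ≤ (fibSub (fibWord m)).length := by
    rcases two_cases (fibWord m) with h | h <;> rw [h] <;> simp [fibSub]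
  rw [B_succ]; omega

lemma B_strictMono : StrictMono B := strictMono_nat_of_lt_succ B_lt

lemma le_B (m : ℕ) : m ≤ B m := by
  have := length_le_phi (fibPrefix m)
  rwa [fibPrefix_length] at this

lemma fibWord_zero : fibWord 0 = 0 := rfl

lemma fibPrefix_one : fibPrefix 1 = [0] := rfl

lemma B_ge {k : ℕ} (hk : 1 ≤ k) : k + 1 ≤ B k := by
  obtain ⟨t, ht⟩ : ∃ t, fibPrefix k = 0 :: t := by
    obtain ⟨t, ht⟩ := fibPrefix_mono hk
    exact ⟨t, by rw [← ht]; rfl⟩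
  have h1 : (phi (fibPrefix k)).length = 2 + (phi t).length := by
    rw [ht, phi_cons]; simp [fibSub]; omega
  have h2 := length_le_phi t
  have h3 : (fibPrefix k).length = t.length + 1 := by rw [ht]; simp
  rw [fibPrefix_length] at h3
  show k + 1 ≤ (phi (fibPrefix k)).length
  omega

lemma B_interval (p : ℕ) : ∃ m, B m ≤ p ∧ p < B (m + 1) := by
  induction p with
  | zero => exact ⟨0, le_refl _, B_lt 0⟩
  | succ p ih =>
    obtain ⟨m, h1, h2⟩ := ih
    rcases Nat.lt_or_ge (p + 1) (B (m + 1)) with h | h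
    · exact ⟨m, by omega, h⟩
    · exact ⟨m + 1, by omega, by have := B_lt (m + 1); omega⟩

lemma block_decomp (m : ℕ) :
    fibPrefix (B (m + 1)) = fibPrefix (B m) ++ fibSub (fibWord m) := by
  rw [← phi_fibPrefix, ← phi_fibPrefix, fibPrefix_succ, phi_append, phi_cons]
  simp

lemma letter_at_B (m : ℕ) : fibWord (B m) = 0 := by
  have h : B m < B (m + 1) := B_lt m
  have e := List.getElem_of_eq (block_decomp m) (h.trans_le (by rw [fibPrefix_length]))
  rw [fibPrefix_getElem h] at e
  rw [e]
  rw [List.getElem_append_right (by rw [fibPrefix_length])]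
  simp only [fibPrefix_length, Nat.sub_self]
  rw [List.getElem_eq_iff]
  rcases two_cases (fibWord m) with h | h <;> simp [h, fibSub]

lemma letter_at_B1 {m : ℕ} (h : fibWord m = 0) : fibWord (B m + 1) = 1 := by
  have hlt : B m + 1 < B (m + 1) := by rw [B_succ, h]; simp [fibSub]
  have e := List.getElem_of_eq (block_decomp m) (hlt.trans_le (by rw [fibPrefix_length]))
  rw [fibPrefix_getElem hlt] at e
  rw [e]
  rw [List.getElem_append_right (by rw [fibPrefix_length]; omega)]
  simp only [fibPrefix_length]
  rw [List.getElem_eq_iff]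
  simp [h, fibSub]

lemma exists_B_of_zero {p : ℕ} (h : fibWord p = 0) : ∃ m, B m = p := by
  obtain ⟨m, h1, h2⟩ := B_interval p
  rcases Nat.eq_or_lt_of_le h1 with he | hlt
  · exact ⟨m, he⟩
  · exfalso
    have hw : fibWord m = 0 := by
      by_contra hc
      rcases two_cases (fibWord m) with h' | h'
      · exact hc h'
      · rw [B_succ, h'] at h2; simp [fibSub] at h2; omega
    have : p = B m + 1 := by rw [B_succ, hw] at h2; simp [fibSub] at h2; omega
    rw [this, letter_at_B1 hw] at h
    exact absurd h (by decide)

lemma one_structure {p : ℕ} (h : fibWord p = 1) : ∃ m, fibWord m = 0 ∧ p = B m + 1 := by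
  obtain ⟨m, h1, h2⟩ := B_interval p
  rcases Nat.eq_or_lt_of_le h1 with he | hlt
  · rw [← he, letter_at_B m] at h; exact absurd h (by decide)
  · have hw : fibWord m = 0 := by
      by_contra hc
      rcases two_cases (fibWord m) with h' | h'
      · exact hc h'
      · rw [B_succ, h'] at h2; simp [fibSub] at h2; omega
    have hp : p = B m + 1 := by rw [B_succ, hw] at h2; simp [fibSub] at h2; omega
    exact ⟨m, hw, hp⟩

lemma zero_after_one {p : ℕ} (h : fibWord p = 1) : fibWord (p + 1) = 0 := by
  obtain ⟨m, hw, hp⟩ := one_structure h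
  have : p + 1 = B (m + 1) := by rw [B_succ, hw, hp]; simp [fibSub]
  rw [this]; exact letter_at_B (m + 1)

lemma zero_before_one {p : ℕ} (h : fibWord (p + 1) = 1) : fibWord p = 0 := by
  obtain ⟨m, hw, hp⟩ := one_structure h
  have : p = B m := by omega
  rw [this]; exact letter_at_B m
lemma rev_identity (u : List (Fin 2)) : phi u.reverse ++ [0] = 0 :: (phi u).reverse := by
  induction u with
  | nil => rfl
  | cons x t ih =>
    have hx : fibSub x ++ [(0 : Fin 2)] = 0 :: (fibSub x).reverse := by
      rcases two_cases x with h | h <;> rw [h] <;> rfl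
    simp only [List.reverse_cons, phi, List.flatMap_append, List.flatMap_cons,
      List.flatMap_nil, List.append_nil, List.reverse_append, List.append_assoc]
    rw [hx, show (0 : Fin 2) :: (fibSub x).reverse = [0] ++ (fibSub x).reverse from rfl,
       ← List.append_assoc]
    simp only [phi] at ih
    rw [ih]
    simp

lemma pal_phi {u : List (Fin 2)} (h : u.Palindrome) : (phi u ++ [(0 : Fin 2)]).Palindrome := by
  apply List.Palindrome.of_reverse_eq
  rw [List.reverse_append, List.reverse_singleton]
  have := rev_identity u
  rw [h.reverse_eq] at this
  simp only [List.singleton_append]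
  exact this.symm

lemma pal_tail {u t : List (Fin 2)} (hu : u.Palindrome) (h : phi u = 0 :: t) :
    t.Palindrome := by
  apply List.Palindrome.of_reverse_eq
  have h1 := rev_identity u
  rw [hu.reverse_eq, h] at h1
  -- h1 : (0 :: t) ++ [0] = 0 :: (0 :: t).reverse
  simp only [List.cons_append, List.reverse_cons] at h1
  have h2 : t ++ [0] = t.reverse ++ [0] := List.tail_eq_of_cons_eq h1
  exact (List.append_inj_left' h2 rfl).symm

lemma suffix_phi {u v : List (Fin 2)} (h : u <:+ v) : phi u <:+ phi v := by
  obtain ⟨t, ht⟩ := h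
  exact ⟨phi t, by rw [← phi_append, ht]⟩

lemma suffix_append_right {α : Type*} {u v : List α} (w : List α) (h : u <:+ v) :
    u ++ w <:+ v ++ w := by
  obtain ⟨t, ht⟩ := h
  exact ⟨t, by rw [← List.append_assoc, ht]⟩

lemma stripLast {α : Type*} {a b : List α} {c d : α} (h : a ++ [c] <:+ b ++ [d]) :
    c = d ∧ a <:+ b := by
  obtain ⟨t, ht⟩ := h
  rw [← List.append_assoc] at ht
  obtain ⟨h1, h2⟩ := List.append_inj' ht rfl
  exact ⟨List.singleton_injective.eq_iff.mp h2 |>.symm ▸ rfl, ⟨t, h1⟩⟩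

lemma suffix_snoc_cases {α : Type*} {u v : List α} {x : α} (h : u <:+ v ++ [x]) :
    u = [] ∨ ∃ u', u = u' ++ [x] ∧ u' <:+ v := by
  rcases List.eq_nil_or_concat u with hn | ⟨u', c, hc⟩
  · exact Or.inl hn
  · rw [List.concat_eq_append] at hc
    subst hc
    obtain ⟨h1, h2⟩ := stripLast h
    exact Or.inr ⟨u', by rw [h1], h2⟩

lemma lemmaR {u : List (Fin 2)} {q : ℕ} (h : phi u <:+ fibPrefix q) (hq : fibWord q = 0) :
    ∃ m, B m = q ∧ u <:+ fibPrefix m := by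
  induction u using List.reverseRecOn generalizing q with
  | nil =>
    obtain ⟨m, hm⟩ := exists_B_of_zero hq
    exact ⟨m, hm, List.nil_suffix⟩
  | append_singleton u' x ih =>
    rcases two_cases x with hx | hx <;> subst hx
    · -- x = 0 : phi (u' ++ [0]) = phi u' ++ [0, 1]
      have hphi : phi (u' ++ [0]) = (phi u' ++ [0]) ++ [1] := by
        rw [phi_append]; simp [fibSub]
      rw [hphi] at h
      have hlen : 2 ≤ q := by
        have := h.length_le
        simp [fibPrefix_length] at this
        omega
      obtain ⟨q₂, rfl⟩ : ∃ q₂, q = q₂ + 2 := ⟨q - 2, by omega⟩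
      rw [show q₂ + 2 = (q₂ + 1) + 1 from rfl, fibPrefix_succ (q₂ + 1)] at h
      obtain ⟨h1, h2⟩ := stripLast h
      rw [fibPrefix_succ q₂] at h2
      obtain ⟨h3, h4⟩ := stripLast h2
      obtain ⟨m', hm', hu'⟩ := ih h4 h3.symm
      have hw : fibWord m' = 0 := by
        by_contra hc
        rcases two_cases (fibWord m') with h' | h'
        · exact hc h'
        · have hB : B (m' + 1) = q₂ + 1 := by rw [B_succ, h', hm']; simp [fibSub]
          have := letter_at_B (m' + 1)
          rw [hB, ← h1] at this
          exact absurd this (by decide)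
      refine ⟨m' + 1, ?_, ?_⟩
      · rw [B_succ, hw, hm']; simp [fibSub]
      · rw [fibPrefix_succ, hw]
        exact suffix_append_right _ hu'
    · -- x = 1 : phi (u' ++ [1]) = phi u' ++ [0]
      have hphi : phi (u' ++ [1]) = phi u' ++ [0] := by
        rw [phi_append]; simp [fibSub]
      rw [hphi] at h
      have hlen : 1 ≤ q := by
        have := h.length_le
        simp [fibPrefix_length] at this
        omega
      obtain ⟨q₂, rfl⟩ : ∃ q₂, q = q₂ + 1 := ⟨q - 1, by omega⟩
      rw [fibPrefix_succ q₂] at h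
      obtain ⟨h1, h2⟩ := stripLast h
      obtain ⟨m', hm', hu'⟩ := ih h2 h1.symm
      have hw : fibWord m' = 1 := by
        by_contra hc
        rcases two_cases (fibWord m') with h' | h'
        · have := letter_at_B1 h'
          rw [hm'] at this
          rw [this] at hq
          exact absurd hq (by decide)
        · exact hc h'
      refine ⟨m' + 1, ?_, ?_⟩
      · rw [B_succ, hw, hm']; simp [fibSub]
      · rw [fibPrefix_succ, hw]
        exact suffix_append_right _ hu'
lemma key (n : ℕ) : 1 ≤ n → ∃ u : List (Fin 2), u ≠ [] ∧ u <:+ fibPrefix n ∧ u.Palindrome ∧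
    ∀ k, k < n → ¬ u <:+ fibPrefix k := by
  induction n using Nat.strong_induction_on with
  | _ n ih =>
  intro hn
  rcases Nat.eq_or_lt_of_le hn with h1 | h1
  · refine ⟨[0], by simp, ?_, List.Palindrome.singleton 0, ?_⟩
    · rw [← h1, fibPrefix_one]
    · intro k hk hs
      have hk0 : k = 0 := by omega
      subst hk0
      have := hs.length_le
      simp [fibPrefix] at this
  · obtain ⟨n₀, rfl⟩ : ∃ n₀, n = n₀ + 1 := ⟨n - 1, by omega⟩
    have hn₀ : 1 ≤ n₀ := by omega
    rcases two_cases (fibWord n₀) with hx | hx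
    · -- Rule 1 : the last letter of fibPrefix n is 0, so n - 1 = B m
      obtain ⟨m, hBm⟩ := exists_B_of_zero hx
      have hm1 : 1 ≤ m := by
        rcases Nat.eq_zero_or_pos m with h | h
        · rw [h, B_zero] at hBm; omega
        · exact h
      have hmn : m < n₀ + 1 := by have := le_B m; omega
      obtain ⟨u, hne, hsuf, hpal, hnew⟩ := ih m hmn hm1
      have hul : 1 ≤ u.length := by
        rcases u with _ | ⟨y, t⟩
        · exact absurd rfl hne
        · simp
      have hphil : 1 ≤ (phi u).length := le_trans hul (length_le_phi u)
      refine ⟨phi u ++ [0], by simp, ?_, pal_phi hpal, ?_⟩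
      · have h2 : phi u <:+ fibPrefix n₀ := by
          rw [← hBm, ← phi_fibPrefix]; exact suffix_phi hsuf
        rw [fibPrefix_succ n₀, hx]
        exact suffix_append_right _ h2
      · intro k hk hs
        have hlen : 2 ≤ k := by
          have h3 := hs.length_le
          rw [fibPrefix_length, List.length_append, List.length_singleton] at h3
          omega
        obtain ⟨k₂, rfl⟩ : ∃ k₂, k = k₂ + 1 := ⟨k - 1, by omega⟩
        rw [fibPrefix_succ k₂] at hs
        obtain ⟨hlast, hs2⟩ := stripLast hs
        obtain ⟨m', hBm', hsu⟩ := lemmaR hs2 hlast.symm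
        have hm'm : m' < m := B_strictMono.lt_iff_lt.mp (by omega)
        exact hnew m' hm'm hsu
    · -- Rule 2 : the last letter of fibPrefix n is 1, so n = B (m + 1), fibWord m = 0
      obtain ⟨m, hw0, hp⟩ := one_structure hx
      have hBm1 : B (m + 1) = n₀ + 1 := by rw [B_succ, hw0]; simp [fibSub]; omega
      have hmn : m + 1 < n₀ + 1 := by
        have := B_ge (k := m + 1) (by omega)
        omega
      obtain ⟨u, hne, hsuf, hpal, hnew⟩ := ih (m + 1) hmn (by omega)
      rw [fibPrefix_succ m, hw0] at hsuf
      obtain hnil | ⟨u₀, hu₀, hu₀s⟩ := suffix_snoc_cases hsuf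
      · exact absurd hnil hne
      have hrev : u = 0 :: u₀.reverse := by
        conv_lhs => rw [← hpal.reverse_eq]
        rw [hu₀]; simp
      set w : List (Fin 2) := 1 :: phi u₀.reverse with hwdef
      have hphiu : phi u = 0 :: w := by
        rw [hrev, hwdef]; simp [phi, fibSub]
      have hwform : ∃ bt, w = bt ++ [1] := by
        have h0 : (0 : Fin 2) :: w = (phi u₀ ++ [0]) ++ [1] := by
          rw [← hphiu, hu₀, phi_append]
          simp [phi, fibSub]
        rcases hA : phi u₀ ++ [(0 : Fin 2)] with _ | ⟨b, bt⟩
        · exact absurd hA (by simp)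
        · rw [hA] at h0
          exact ⟨bt, by simpa using (List.tail_eq_of_cons_eq h0)⟩
      refine ⟨w, by simp [hwdef], ?_, pal_tail hpal hphiu, ?_⟩
      · have h2 : phi u <:+ fibPrefix (n₀ + 1) := by
          rw [← hBm1, ← phi_fibPrefix]; exact suffix_phi (by rw [fibPrefix_succ m, hw0]; exact hsuf)
        have h3 : w <:+ phi u := by rw [hphiu]; exact List.suffix_cons 0 w
        exact h3.trans h2
      · intro k hk hs
        obtain ⟨bt, hbt⟩ := hwform
        have hk1 : 1 ≤ k := by
          have h3 := hs.length_le
          rw [fibPrefix_length] at h3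
          rw [hwdef] at h3
          simp at h3
          omega
        obtain ⟨k₂, rfl⟩ : ∃ k₂, k = k₂ + 1 := ⟨k - 1, by omega⟩
        have hlast : fibWord k₂ = 1 := by
          rw [hbt, fibPrefix_succ k₂] at hs
          exact (stripLast hs).1.symm
        have hfk : fibWord (k₂ + 1) = 0 := zero_after_one hlast
        obtain ⟨t, ht⟩ := hs
        have htpre : t = fibPrefix t.length := prefix_fibPrefix_eq ⟨w, ht⟩
        have hjlt : t.length < k₂ + 1 := by
          have := congrArg List.length ht
          rw [List.length_append, fibPrefix_length, hwdef] at this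
          simp at this
          omega
        have hj1 : 1 ≤ t.length := by
          rcases Nat.eq_zero_or_pos t.length with h0 | h0
          · exfalso
            rw [List.length_eq_zero_iff.mp h0] at ht
            simp only [List.nil_append] at ht
            have he := fibPrefix_getElem (show 0 < k₂ + 1 by omega)
            have e2 := List.getElem_of_eq ht.symm
              (show 0 < (fibPrefix (k₂ + 1)).length by rw [fibPrefix_length]; omega)
            rw [he] at e2
            simp only [hwdef, List.getElem_cons_zero] at e2
            exact absurd e2 (by decide)
          · exact h0
        obtain ⟨j₂, hj₂⟩ : ∃ j₂, t.length = j₂ + 1 := ⟨t.length - 1, by omega⟩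
        have hwj : fibWord t.length = 1 := by
          have he := fibPrefix_getElem hjlt
          have e2 := List.getElem_of_eq ht.symm
            (show t.length < (fibPrefix (k₂ + 1)).length by rw [fibPrefix_length]; omega)
          rw [he] at e2
          rw [List.getElem_append_right (le_refl t.length)] at e2
          simp only [Nat.sub_self, hwdef, List.getElem_cons_zero] at e2
          exact e2
        have hj₂0 : fibWord j₂ = 0 := zero_before_one (by rw [← hj₂]; exact hwj)
        have hsphi : phi u <:+ fibPrefix (k₂ + 1) := by
          refine ⟨fibPrefix j₂, ?_⟩
          rw [hphiu, ← ht, htpre, hj₂, fibPrefix_succ j₂, hj₂0]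
          simp
        obtain ⟨m'', hBm'', hsu⟩ := lemmaR hsphi hfk
        have : m'' < m + 1 := B_strictMono.lt_iff_lt.mp (by omega)
        exact hnew m'' this hsu
lemma infix_iff {w : List (Fin 2)} {n : ℕ} :
    w <:+: fibPrefix n ↔ ∃ m, m ≤ n ∧ w <:+ fibPrefix m := by
  constructor
  · rintro ⟨s, t, hst⟩
    have hpre : s ++ w <+: fibPrefix n := ⟨t, by rw [← hst, List.append_assoc]⟩
    have heq := prefix_fibPrefix_eq hpre
    refine ⟨(s ++ w).length, ?_, ?_⟩
    · have := hpre.length_le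
      rwa [fibPrefix_length] at this
    · rw [← heq]; exact ⟨s, rfl⟩
  · rintro ⟨m, hm, hs⟩
    exact hs.isInfix.trans (fibPrefix_mono hm).isInfix

lemma infix_snoc {α : Type*} {w v : List α} {x : α} (h : v <:+: w ++ [x])
    (h2 : ¬ v <:+: w) : v <:+ w ++ [x] := by
  obtain ⟨s, t, hst⟩ := h
  rcases List.eq_nil_or_concat t with hn | ⟨t', c, hc⟩
  · subst hn
    rw [List.append_nil] at hst
    exact ⟨s, hst⟩
  · rw [List.concat_eq_append] at hc
    subst hc
    exfalso
    apply h2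
    rw [show s ++ v ++ (t' ++ [c]) = (s ++ v ++ t') ++ [c] by simp] at hst
    obtain ⟨h1, _⟩ := List.append_inj' hst rfl
    exact ⟨s, t', by rw [← h1]⟩

lemma new_pal_unique_aux {α : Type*} {w : List α} {x : α} {u v : List α}
    (hu : u <:+ w ++ [x]) (hv : v <:+ w ++ [x]) (hpu : u.Palindrome) (hpv : v.Palindrome)
    (hnu : ¬ u <:+: w) (hnv : ¬ v <:+: w) (hlen : u.length ≤ v.length) : u = v := by
  have husv : u <:+ v := by
    obtain ⟨s, hs⟩ := hu
    obtain ⟨t, htv⟩ := hv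
    rw [← htv] at hs
    -- s ++ u = t ++ v ; |u| ≤ |v| so u is a suffix of v
    have h5 : (t ++ v).drop ((t ++ v).length - u.length) = u := by
      rw [← hs, show (s ++ u).length - u.length = s.length by simp, List.drop_left]
    have hte : (t ++ v).drop ((t ++ v).length - u.length) = v.drop (v.length - u.length) := by
      rw [List.drop_append,
          List.drop_eq_nil_of_le (by rw [List.length_append]; omega),
          show (t ++ v).length - u.length - t.length = v.length - u.length by
            rw [List.length_append]; omega]
      simp
    rw [← h5, hte]
    exact List.drop_suffix _ _
  rcases Nat.eq_or_lt_of_le hlen with he | hlt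
  · exact List.IsSuffix.eq_of_length husv he
  · exfalso
    -- u is a proper suffix of v, hence (palindromes) a proper prefix, so u occurs in w
    have hupv : u <+: v := by
      have : u.reverse <+: v.reverse := List.reverse_prefix.mpr husv
      rwa [hpu.reverse_eq, hpv.reverse_eq] at this
    obtain ⟨r, hr⟩ := hupv
    have hrne : r ≠ [] := by
      intro h
      rw [h, List.append_nil] at hr
      rw [hr] at hlt
      omega
    obtain ⟨r', c, hc⟩ := (List.eq_nil_or_concat r).resolve_left hrne
    rw [List.concat_eq_append] at hc
    subst hc
    obtain ⟨t, htv⟩ := hv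
    rw [← hr] at htv
    rw [show t ++ (u ++ (r' ++ [c])) = (t ++ u ++ r') ++ [c] by simp] at htv
    obtain ⟨h1, _⟩ := List.append_inj' htv rfl
    exact hnu ⟨t, r', by rw [← h1]⟩

lemma new_pal_unique {α : Type*} {w : List α} {x : α} {u v : List α}
    (hu : u <:+ w ++ [x]) (hv : v <:+ w ++ [x]) (hpu : u.Palindrome) (hpv : v.Palindrome)
    (hnu : ¬ u <:+: w) (hnv : ¬ v <:+: w) : u = v := by
  rcases Nat.le_total u.length v.length with h | h
  · exact new_pal_unique_aux hu hv hpu hpv hnu hnv h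
  · exact (new_pal_unique_aux hv hu hpv hpu hnv hnu h).symm

lemma S_finite (n : ℕ) :
    {w : List (Fin 2) | w ≠ [] ∧ w <:+: fibPrefix n ∧ w.Palindrome}.Finite := by
  apply Set.Finite.subset (List.finite_toSet (fibPrefix n).sublists)
  rintro w ⟨_, hinf, _⟩
  simpa using List.mem_sublists.mpr hinf.sublist
end FibRich

open FibRich

/-- For every `n ≥ 1`, the prefix `F[1,n]` of the Fibonacci word contains exactly `n`
distinct nonempty palindromic factors. -/
theorem fib_rich (n : ℕ) (hn : 1 ≤ n) :
    {w : List (Fin 2) | w ≠ [] ∧ w <:+: fibPrefix n ∧ w.Palindrome}.ncard = n := by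
  induction n, hn using Nat.le_induction with
  | base =>
    have hset : {w : List (Fin 2) | w ≠ [] ∧ w <:+: fibPrefix 1 ∧ w.Palindrome} = {[0]} := by
      ext w
      simp only [Set.mem_setOf_eq, Set.mem_singleton_iff]
      constructor
      · rintro ⟨hne, hinf, -⟩
        rw [fibPrefix_one] at hinf
        rcases List.sublist_singleton.mp hinf.sublist with h | h
        · exact absurd h hne
        · exact h
      · rintro rfl
        exact ⟨by simp, by rw [fibPrefix_one], List.Palindrome.singleton 0⟩
    rw [hset, Set.ncard_singleton]
  | succ n hn ihn =>
    obtain ⟨u, hne, hsuf, hpal, hnew⟩ := key (n + 1) (by omega)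
    have hnotin : ¬ u <:+: fibPrefix n := by
      intro h
      obtain ⟨m, hm, hs⟩ := infix_iff.mp h
      exact hnew m (by omega) hs
    have hself : ∀ {v : List (Fin 2)}, v <:+: fibPrefix n → v <:+: fibPrefix (n + 1) :=
      fun h => h.trans (fibPrefix_mono (by omega)).isInfix
    have hstep : {w : List (Fin 2) | w ≠ [] ∧ w <:+: fibPrefix (n + 1) ∧ w.Palindrome} =
        insert u {w : List (Fin 2) | w ≠ [] ∧ w <:+: fibPrefix n ∧ w.Palindrome} := by
      ext v
      simp only [Set.mem_setOf_eq, Set.mem_insert_iff]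
      constructor
      · rintro ⟨hvne, hvinf, hvpal⟩
        by_cases hc : v <:+: fibPrefix n
        · exact Or.inr ⟨hvne, hc, hvpal⟩
        · left
          rw [fibPrefix_succ n] at hvinf
          have hvsuf : v <:+ fibPrefix n ++ [fibWord n] := infix_snoc hvinf hc
          have husuf : u <:+ fibPrefix n ++ [fibWord n] := by
            rw [← fibPrefix_succ n]; exact hsuf
          exact new_pal_unique hvsuf husuf hvpal hpal hc hnotin
      · rintro (rfl | ⟨hvne, hvinf, hvpal⟩)
        · exact ⟨hne, hsuf.isInfix, hpal⟩
        · exact ⟨hvne, hself hvinf, hvpal⟩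
    rw [hstep, Set.ncard_insert_of_notMem (fun hmem => hnotin hmem.2.1) (S_finite n), ihn]
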